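/- There exists a function G : (ℕ+ →₀ ℕ) → ℕ (taking nonnegative integer values) such that for every finitely supported m : ℕ+ →₀ ℕ with m ≠ 0, C_m = Σ_{n ≥ 1 with m(n) ≥ 1} G(m − e_n). (This is the Wildberger–Rubine factorisation S = 1 + (t_1 + t_2 + ⋯)·G with G having nonnegative integer coefficients.) -/

import Mathlib

/-- The hyper-Catalan number
`C_m = (Σ n·m n)! / ((1 + Σ (n−1)·m n)! · Π (m n)!)`. -/
def hyperCatalan (m : ℕ+ →₀ ℕ) : ℕ :=
  (m.sum fun n k => (n : ℕ) * k).factorial /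
    ((1 + m.sum fun n k => ((n : ℕ) - 1) * k).factorial * m.prod fun _ k => k.factorial)

open Finsupp


/-- weight: number of edges -/
def wgt (m : ℕ+ →₀ ℕ) : ℕ := m.sum fun n k => (n : ℕ) * k
/-- Σ (n-1) m_n -/
def dgt (m : ℕ+ →₀ ℕ) : ℕ := m.sum fun n k => ((n : ℕ) - 1) * k
/-- Π (m_n)! -/
def pft (m : ℕ+ →₀ ℕ) : ℕ := m.prod fun _ k => k.factorial

lemma sub_add_single {m : ℕ+ →₀ ℕ} {j : ℕ+} (hj : j ∈ m.support) :
    (m - single j 1) + single j 1 = m := by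
  ext i
  rcases eq_or_ne i j with rfl | hij
  · simp only [Finsupp.add_apply, Finsupp.tsub_apply, Finsupp.single_eq_same]
    have : 1 ≤ m i := Nat.one_le_iff_ne_zero.2 (Finsupp.mem_support_iff.1 hj)
    omega
  · simp [Finsupp.single_eq_of_ne' (Ne.symm hij)]

lemma wgt_sub_single {m : ℕ+ →₀ ℕ} {j : ℕ+} (hj : j ∈ m.support) :
    wgt m = wgt (m - single j 1) + (j : ℕ) := by
  conv_lhs => rw [← sub_add_single hj]
  unfold wgt
  rw [Finsupp.sum_add_index' (by intro n; simp) (by intro n a b; ring)]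
  rw [Finsupp.sum_single_index (by simp)]
  ring

lemma dgt_sub_single {m : ℕ+ →₀ ℕ} {j : ℕ+} (hj : j ∈ m.support) :
    dgt m + 1 = dgt (m - single j 1) + (j : ℕ) := by
  conv_lhs => rw [← sub_add_single hj]
  unfold dgt
  rw [Finsupp.sum_add_index' (by intro n; simp) (by intro n a b; ring)]
  rw [Finsupp.sum_single_index (by simp)]
  have : 1 ≤ (j : ℕ) := j.one_le
  omega

lemma pft_sub_single {m : ℕ+ →₀ ℕ} {j : ℕ+} (hj : j ∈ m.support) :
    pft m = pft (m - single j 1) * m j := by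
  set m' : ℕ+ →₀ ℕ := m - single j 1 with hm'
  have hsub : m'.support ⊆ m.support := by
    intro i hi
    rw [Finsupp.mem_support_iff] at hi ⊢
    rw [hm', Finsupp.tsub_apply] at hi
    omega
  have h1 : pft m' = ∏ i ∈ m.support, (m' i).factorial :=
    Finsupp.prod_of_support_subset _ hsub _ (by intro i _; simp)
  have h2 : pft m = ∏ i ∈ m.support, (m i).factorial := rfl
  rw [h1, h2, ← Finset.mul_prod_erase _ _ hj, ← Finset.mul_prod_erase _ (fun i => (m' i).factorial) hj]
  have hmj : 1 ≤ m j := Nat.one_le_iff_ne_zero.2 (Finsupp.mem_support_iff.1 hj)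
  have h3 : ∀ i ∈ m.support.erase j, (m' i).factorial = (m i).factorial := by
    intro i hi
    rw [hm', Finsupp.tsub_apply, Finsupp.single_eq_of_ne' (Ne.symm (Finset.ne_of_mem_erase hi))]
    simp
  rw [Finset.prod_congr rfl h3]
  rw [hm', Finsupp.tsub_apply, Finsupp.single_eq_same]
  have : (m j).factorial = m j * (m j - 1).factorial := by
    conv_lhs => rw [show m j = (m j - 1) + 1 by omega]
    rw [Nat.factorial_succ]
    congr 1; omega
  rw [this]
  ring

lemma wgt_eq_zero {m : ℕ+ →₀ ℕ} : wgt m = 0 ↔ m = 0 := by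
  constructor
  · intro h
    by_contra hm
    obtain ⟨j, hj⟩ : ∃ j, j ∈ m.support := by
      rcases Finset.eq_empty_or_nonempty m.support with he | ⟨j, hj⟩
      · exact absurd (Finsupp.support_eq_empty.1 he) hm
      · exact ⟨j, hj⟩
    have h1 := wgt_sub_single hj
    have h2 := j.pos
    omega
  · rintro rfl; simp [wgt]

lemma dgt_add_card {m : ℕ+ →₀ ℕ} : dgt m + m.sum (fun _ k => k) = wgt m := by
  unfold dgt wgt
  rw [Finsupp.sum, Finsupp.sum, Finsupp.sum, ← Finset.sum_add_distrib]
  apply Finset.sum_congr rfl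
  intro j _
  have key : ∀ a k : ℕ, 1 ≤ a → (a - 1) * k + k = a * k := by
    intro a k h
    cases a with
    | zero => omega
    | succ b => simp [Nat.succ_sub_one, Nat.succ_mul]
  exact key _ _ j.pos

lemma wgt_sum_support {m : ℕ+ →₀ ℕ} : wgt m = ∑ j ∈ m.support, (j : ℕ) * m j := rfl

/-- Forest numbers, defined by the fundamental recurrence. -/
noncomputable def P : ℕ → (ℕ+ →₀ ℕ) → ℕ
  | 0, m => if m = 0 then 1 else 0
  | (n+1), m => P n m + ∑ j ∈ m.support.attach, P (n + (j : ℕ+)) (m - single (j : ℕ+) 1)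
termination_by n m => (wgt m, n)
decreasing_by
  · exact Prod.Lex.right _ (Nat.lt_succ_self n)
  · apply Prod.Lex.left
    have h1 := wgt_sub_single j.2
    have h2 := (j : ℕ+).pos
    omega

lemma P_succ (n : ℕ) (m : ℕ+ →₀ ℕ) :
    P (n+1) m = P n m + ∑ j ∈ m.support.attach, P (n + (j : ℕ+)) (m - single (j : ℕ+) 1) := by
  rw [P]

lemma P_zero_right (n : ℕ) : P n 0 = 1 := by
  induction n with
  | zero => rw [P]; simp
  | succ k ih => rw [P_succ, ih]; simp

lemma pft_pos (m : ℕ+ →₀ ℕ) : 0 < pft m :=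
  Finset.prod_pos (fun i _ => Nat.factorial_pos _)

theorem P_cf (n : ℕ) (m : ℕ+ →₀ ℕ) :
    P (n+1) m * ((n + 1 + dgt m).factorial * pft m) = (n+1) * (wgt m + n).factorial := by
  rcases eq_or_ne m 0 with rfl | hm
  · rw [P_zero_right]
    simp [dgt, pft, wgt, Nat.factorial_succ]
  · -- m ≠ 0
    have hsupp : m.support.Nonempty := by
      rcases Finset.eq_empty_or_nonempty m.support with he | h
      · exact absurd (Finsupp.support_eq_empty.1 he) hm
      · exact h
    obtain ⟨W', hW⟩ : ∃ W', wgt m = W' + 1 := by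
      have h0 : wgt m ≠ 0 := fun h => hm (wgt_eq_zero.1 h)
      exact ⟨wgt m - 1, by omega⟩
    obtain ⟨s', hs'⟩ : ∃ s', m.sum (fun _ k => k) = s' + 1 := by
      obtain ⟨j, hj⟩ := hsupp
      have h1 : 1 ≤ m j := Nat.one_le_iff_ne_zero.2 (Finsupp.mem_support_iff.1 hj)
      have h2 : m j ≤ ∑ i ∈ m.support, m i :=
        Finset.single_le_sum (fun i _ => Nat.zero_le _) hj
      have h3 : m.sum (fun _ k => k) = ∑ i ∈ m.support, m i := rfl
      exact ⟨m.sum (fun _ k => k) - 1, by omega⟩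
    have hds : dgt m + (s' + 1) = W' + 1 := by
      have := dgt_add_card (m := m)
      omega
    rw [P_succ, add_mul, Finset.sum_mul]
    have hterm : ∀ j ∈ m.support.attach,
        P (n + ((j : ℕ+) : ℕ)) (m - single (j : ℕ+) 1) * ((n + 1 + dgt m).factorial * pft m)
          = (n + ((j : ℕ+) : ℕ)) * m (j : ℕ+) * (W' + n).factorial := by
      intro j _
      have hj : (j : ℕ+) ∈ m.support := j.2
      obtain ⟨i, hi⟩ : ∃ i, (((j : ℕ+)) : ℕ) = i + 1 := ⟨(((j : ℕ+)) : ℕ) - 1, by have := (j : ℕ+).pos; omega⟩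
      have hd := dgt_sub_single hj
      have hw := wgt_sub_single hj
      have hp := pft_sub_single hj
      have hrec := P_cf (n + i) (m - single (j : ℕ+) 1)
      have e1 : n + (((j : ℕ+)) : ℕ) = (n + i) + 1 := by omega
      have e2 : n + i + 1 + dgt (m - single (j : ℕ+) 1) = n + 1 + dgt m := by omega
      have e3 : wgt (m - single (j : ℕ+) 1) + (n + i) = W' + n := by omega
      rw [e2, e3] at hrec
      calc P (n + (((j : ℕ+)) : ℕ)) (m - single (j : ℕ+) 1) * ((n + 1 + dgt m).factorial * pft m)
          = (P ((n + i) + 1) (m - single (j : ℕ+) 1) *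
              ((n + 1 + dgt m).factorial * pft (m - single (j : ℕ+) 1))) * m (j : ℕ+) := by
            rw [e1, hp]; ring
        _ = ((n + i + 1) * (W' + n).factorial) * m (j : ℕ+) := by rw [hrec]
        _ = (n + (((j : ℕ+)) : ℕ)) * m (j : ℕ+) * (W' + n).factorial := by rw [e1]; ring
    rw [Finset.sum_congr rfl hterm]
    have hsum : ∑ j ∈ m.support.attach, (n + ((j : ℕ+) : ℕ)) * m (j : ℕ+) * (W' + n).factorial
        = (n * (s' + 1) + (W' + 1)) * (W' + n).factorial := by
      rw [Finset.sum_attach m.support (fun j => (n + (j : ℕ)) * m j * (W' + n).factorial)]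
      rw [← Finset.sum_mul]
      congr 1
      have expand : ∀ j ∈ m.support, (n + (j : ℕ)) * m j = n * m j + (j : ℕ) * m j := by
        intro j _; ring
      rw [Finset.sum_congr rfl expand, Finset.sum_add_distrib, ← Finset.mul_sum]
      have h3 : m.sum (fun _ k => k) = ∑ i ∈ m.support, m i := rfl
      rw [← h3, hs', ← wgt_sum_support, hW]
    rw [hsum]
    cases n with
    | zero =>
      rw [P]
      simp only [hm, if_false, ite_false]
      have h0 : (if m = 0 then 1 else 0) = 0 := by simp [hm]
      simp only [h0, zero_mul, zero_add, hW, Nat.factorial_succ, Nat.add_zero, zero_add, one_mul]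
    | succ k =>
      have hrec2 := P_cf k m
      have e4 : k + 1 + 1 + dgt m = (k + 2 + dgt m) := by ring
      have e5 : (k + 2 + dgt m).factorial = (k + 2 + dgt m) * (k + 1 + dgt m).factorial := by
        have h : k + 2 + dgt m = (k + 1 + dgt m) + 1 := by ring
        rw [h, Nat.factorial_succ, ← h]
      calc P (k+1) m * ((k + 1 + 1 + dgt m).factorial * pft m) + (((k+1) * (s' + 1) + (W' + 1)) * (W' + (k+1)).factorial)
          = (P (k+1) m * ((k + 1 + dgt m).factorial * pft m)) * (k + 2 + dgt m) + (((k+1) * (s' + 1) + (W' + 1)) * (W' + (k+1)).factorial) := by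
            rw [e4, e5]; ring
        _ = ((k+1) * (wgt m + k).factorial) * (k + 2 + dgt m) + (((k+1) * (s' + 1) + (W' + 1)) * (W' + (k+1)).factorial) := by rw [hrec2]
        _ = (k + 1 + 1) * (wgt m + (k + 1)).factorial := by
            rw [hW]
            have e6 : W' + 1 + k = W' + (k + 1) := by ring
            have e7 : (W' + 1 + (k + 1)).factorial = (W' + k + 2) * (W' + (k+1)).factorial := by
              have h : W' + 1 + (k + 1) = (W' + (k + 1)) + 1 := by ring
              rw [h, Nat.factorial_succ]
              have h2 : W' + (k + 1) + 1 = W' + k + 2 := by ring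
              rw [h2]
            rw [e6, e7]
            have hd' : dgt m = W' - s' := by omega
            have hle : s' ≤ W' := by omega
            obtain ⟨d, hdd⟩ : ∃ d, W' = d + s' := ⟨W' - s', by omega⟩
            have hdm : dgt m = d := by omega
            rw [hdm, hdd]
            ring
  termination_by (wgt m, n)
  decreasing_by
    all_goals first
      | (apply Prod.Lex.left; have hpos := (j : ℕ+).pos; omega)
      | (apply Prod.Lex.right; omega)

theorem hyperCatalan_eq_P_one (m : ℕ+ →₀ ℕ) : hyperCatalan m = P 1 m := by
  have h := P_cf 0 m
  simp only [zero_add, one_mul, Nat.add_zero] at h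
  have hpos : 0 < (1 + dgt m).factorial * pft m :=
    Nat.mul_pos (Nat.factorial_pos _) (pft_pos m)
  unfold hyperCatalan
  have hw : (m.sum fun n k => (n : ℕ) * k) = wgt m := rfl
  have hd : (m.sum fun n k => ((n : ℕ) - 1) * k) = dgt m := rfl
  have hp : (m.prod fun _ k => k.factorial) = pft m := rfl
  rw [hw, hd, hp]
  exact Nat.div_eq_of_eq_mul_left hpos h.symm

abbrev MPS := MvPowerSeries ℕ+ ℕ

noncomputable def PS (n : ℕ) : MPS := fun m => P n m

noncomputable def Dop (F : ℕ+ → MPS) : MPS :=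
  fun m => ∑ j ∈ m.support, (F j) (m - single j 1)

lemma coeff_apply (φ : MPS) (m : ℕ+ →₀ ℕ) : MvPowerSeries.coeff m φ = φ m := rfl

lemma coeff_Dop (F : ℕ+ → MPS) (m : ℕ+ →₀ ℕ) :
    MvPowerSeries.coeff m (Dop F) =
      ∑ j ∈ m.support, MvPowerSeries.coeff (m - single j 1) (F j) := rfl

lemma wgt_add (a b : ℕ+ →₀ ℕ) : wgt (a + b) = wgt a + wgt b := by
  unfold wgt
  exact Finsupp.sum_add_index' (by intro n; simp) (by intro n x y; ring)

lemma Dop_mul (F : ℕ+ → MPS) (H : MPS) : Dop F * H = Dop (fun j => F j * H) := by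
  apply MvPowerSeries.ext
  intro m
  rw [MvPowerSeries.coeff_mul, coeff_Dop]
  have lhs_eq : ∑ p ∈ Finset.HasAntidiagonal.antidiagonal m, MvPowerSeries.coeff p.1 (Dop F) * MvPowerSeries.coeff p.2 H
      = ∑ p ∈ Finset.HasAntidiagonal.antidiagonal m, ∑ j ∈ p.1.support,
          MvPowerSeries.coeff (p.1 - single j 1) (F j) * MvPowerSeries.coeff p.2 H := by
    apply Finset.sum_congr rfl
    intro p _
    rw [coeff_Dop, Finset.sum_mul]
  rw [lhs_eq]
  have rhs_eq : ∀ j ∈ m.support, MvPowerSeries.coeff (m - single j 1) (F j * H)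
      = ∑ q ∈ Finset.HasAntidiagonal.antidiagonal (m - single j 1),
          MvPowerSeries.coeff q.1 (F j) * MvPowerSeries.coeff q.2 H := by
    intro j _
    rw [MvPowerSeries.coeff_mul]
  rw [Finset.sum_congr rfl rhs_eq]
  rw [Finset.sum_sigma', Finset.sum_sigma']
  apply Finset.sum_nbij'
    (i := fun x => (⟨x.2, (x.1.1 - single x.2 1, x.1.2)⟩ :
      (_ : ℕ+) × ((ℕ+ →₀ ℕ) × (ℕ+ →₀ ℕ))))
    (j := fun y => (⟨(y.2.1 + single y.1 1, y.2.2), y.1⟩ :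
      (_ : (ℕ+ →₀ ℕ) × (ℕ+ →₀ ℕ)) × ℕ+))
  · -- hi : maps into
    rintro ⟨⟨a, b⟩, j⟩ hx
    simp only [Finset.mem_sigma, Finset.HasAntidiagonal.mem_antidiagonal] at hx ⊢
    obtain ⟨hab, hj⟩ := hx
    have hja : 1 ≤ a j := Nat.one_le_iff_ne_zero.2 (Finsupp.mem_support_iff.1 hj)
    constructor
    · rw [Finsupp.mem_support_iff]
      have : m j = a j + b j := by rw [← hab]; rfl
      omega
    · ext i
      rcases eq_or_ne i j with rfl | hij
      · simp only [Finsupp.add_apply, Finsupp.tsub_apply, Finsupp.single_eq_same]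
        have : m i = a i + b i := by rw [← hab]; rfl
        omega
      · simp only [Finsupp.add_apply, Finsupp.tsub_apply,
          Finsupp.single_eq_of_ne' (Ne.symm hij)]
        have : m i = a i + b i := by rw [← hab]; rfl
        omega
  · -- hj : maps back into
    rintro ⟨j, ⟨a', b⟩⟩ hy
    simp only [Finset.mem_sigma, Finset.HasAntidiagonal.mem_antidiagonal] at hy ⊢
    obtain ⟨hj, hab⟩ := hy
    have hmj : 1 ≤ m j := Nat.one_le_iff_ne_zero.2 (Finsupp.mem_support_iff.1 hj)
    constructor
    · ext i
      have h := DFunLike.congr_fun hab i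
      simp only [Finsupp.add_apply, Finsupp.tsub_apply] at h ⊢
      rcases eq_or_ne i j with rfl | hij
      · simp only [Finsupp.single_eq_same] at h ⊢
        omega
      · simp only [Finsupp.single_eq_of_ne' (Ne.symm hij)] at h ⊢
        omega
    · rw [Finsupp.mem_support_iff]
      simp only [Finsupp.add_apply, Finsupp.single_eq_same]
      omega
  · -- left inverse
    rintro ⟨⟨a, b⟩, j⟩ hx
    simp only [Finset.mem_sigma, Finset.HasAntidiagonal.mem_antidiagonal] at hx
    obtain ⟨hab, hj⟩ := hx
    have h := sub_add_single hj
    simp [h]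
  · -- right inverse
    rintro ⟨j, ⟨a', b⟩⟩ _
    have : a' + single j 1 - single j 1 = a' := by
      ext i
      rcases eq_or_ne i j with rfl | hij
      · simp only [Finsupp.tsub_apply, Finsupp.add_apply, Finsupp.single_eq_same]
        omega
      · simp [Finsupp.single_eq_of_ne' (Ne.symm hij)]
    simp [this]
  · -- values agree
    rintro ⟨⟨a, b⟩, j⟩ _
    rfl

lemma Dop_add (F G : ℕ+ → MPS) : Dop (fun j => F j + G j) = Dop F + Dop G := by
  apply MvPowerSeries.ext
  intro m
  rw [map_add, coeff_Dop, coeff_Dop, coeff_Dop, ← Finset.sum_add_distrib]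
  apply Finset.sum_congr rfl
  intro j _
  rw [map_add]

lemma Dop_congr {F G : ℕ+ → MPS} (h : ∀ j : ℕ+, F j = G j) : Dop F = Dop G := by
  unfold Dop
  funext m
  exact Finset.sum_congr rfl (fun j _ => by rw [h j])

lemma PS_zero : PS 0 = 1 := by
  apply MvPowerSeries.ext
  intro m
  rw [coeff_apply, MvPowerSeries.coeff_one]
  show P 0 m = _
  rw [P]

lemma PS_succ (n : ℕ) : PS (n+1) = PS n + Dop (fun j => PS (n + (j : ℕ))) := by
  apply MvPowerSeries.ext
  intro m
  rw [map_add, coeff_Dop, coeff_apply, coeff_apply]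
  show P (n+1) m = P n m + _
  rw [P_succ]
  congr 1
  rw [← Finset.sum_attach m.support (fun j => MvPowerSeries.coeff (m - single j 1) (PS (n + (j:ℕ))))]
  rfl

theorem PS_mul_coeff (m : ℕ+ →₀ ℕ) (a b : ℕ) :
    MvPowerSeries.coeff m (PS a * PS b) = P (a + b) m := by
  cases b with
  | zero =>
    rw [PS_zero, mul_one, coeff_apply]
    rfl
  | succ k =>
    rw [PS_succ, mul_add, map_add]
    have h1 : MvPowerSeries.coeff m (PS a * PS k) = P (a + k) m := PS_mul_coeff m a k
    have h2 : PS a * Dop (fun j => PS (k + (j : ℕ))) = Dop (fun j => PS (k + (j : ℕ)) * PS a) := by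
      rw [mul_comm, Dop_mul]
    rw [h1, h2, coeff_Dop]
    have h3 : ∀ j ∈ m.support,
        MvPowerSeries.coeff (m - single j 1) (PS (k + (j : ℕ)) * PS a)
          = P ((a + k) + (j : ℕ)) (m - single j 1) := by
      intro j hj
      have := PS_mul_coeff (m - single j 1) (k + (j : ℕ)) a
      rw [this]
      congr 1
      omega
    rw [Finset.sum_congr rfl h3]
    rw [show a + (k + 1) = (a + k) + 1 by omega, P_succ]
    have h4 : P (a + k) m + ∑ j ∈ m.support.attach, P ((a+k) + ((j : ℕ+) : ℕ)) (m - single (j : ℕ+) 1)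
        = P (a + k) m + ∑ j ∈ m.support, P ((a+k) + (j : ℕ)) (m - single j 1) := by
      congr 1
      exact Finset.sum_attach m.support (fun j => P ((a+k) + (j : ℕ)) (m - single j 1))
    rw [h4]
  termination_by (wgt m, b)
  decreasing_by
    · apply Prod.Lex.right
      omega
    · apply Prod.Lex.left
      have h1 := wgt_sub_single hj
      have h2 := j.pos
      omega

lemma PS_mul (a b : ℕ) : PS a * PS b = PS (a + b) := by
  apply MvPowerSeries.ext
  intro m
  rw [PS_mul_coeff, coeff_apply]
  rfl

noncomputable def Aop : MPS := Dop (fun n => ∑ k ∈ Finset.range (n : ℕ), PS k)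
noncomputable def Bop : MPS := Dop (fun n => PS (n : ℕ))
noncomputable def uop : MPS := Dop (fun _ => 1)

lemma master : PS 1 = 1 + Bop := by
  have h := PS_succ 0
  rw [PS_zero] at h
  rw [h]
  congr 1
  show Dop (fun j => PS (0 + (j:ℕ))) = Bop
  unfold Bop
  exact Dop_congr (fun n => by rw [zero_add])

lemma telescope : Aop * PS 1 + uop = Aop + Bop := by
  unfold Aop Bop uop
  rw [Dop_mul]
  have h1 : ∀ n : ℕ+, (∑ k ∈ Finset.range (n : ℕ), PS k) * PS 1 = ∑ k ∈ Finset.range (n : ℕ), PS (k + 1) := by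
    intro n
    rw [Finset.sum_mul]
    apply Finset.sum_congr rfl
    intro k _
    exact PS_mul k 1
  rw [Dop_congr h1]
  rw [← Dop_add, ← Dop_add]
  apply Dop_congr
  intro n
  have h2 : ∑ k ∈ Finset.range ((n:ℕ) + 1), PS k = (∑ k ∈ Finset.range (n:ℕ), PS (k + 1)) + PS 0 :=
    Finset.sum_range_succ' PS (n : ℕ)
  have h3 : ∑ k ∈ Finset.range ((n:ℕ) + 1), PS k = (∑ k ∈ Finset.range (n:ℕ), PS k) + PS (n:ℕ) :=
    Finset.sum_range_succ PS (n : ℕ)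
  rw [PS_zero] at h2
  rw [← h2, h3]

lemma Bop_fixed : Bop = uop + Aop * Bop := by
  have h : Aop * (1 + Bop) + uop = Aop + Bop := by rw [← master]; exact telescope
  rw [mul_add, mul_one] at h
  apply MvPowerSeries.ext
  intro m
  have h2 := congrArg (MvPowerSeries.coeff m) h
  simp only [map_add] at h2 ⊢
  omega

lemma coeff_Aop_zero : MvPowerSeries.coeff (0 : ℕ+ →₀ ℕ) Aop = 0 := by
  unfold Aop
  rw [coeff_Dop]
  simp

lemma coeff_pow_Aop : ∀ (jp : ℕ) (m : ℕ+ →₀ ℕ), wgt m < jp →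
    MvPowerSeries.coeff m (Aop ^ jp) = 0 := by
  intro jp
  induction jp with
  | zero => intro m hm; omega
  | succ t ih =>
    intro m hm
    rw [pow_succ', MvPowerSeries.coeff_mul]
    apply Finset.sum_eq_zero
    rintro ⟨a, b⟩ hab
    rw [Finset.HasAntidiagonal.mem_antidiagonal] at hab
    rcases eq_or_ne a 0 with rfl | ha
    · rw [coeff_Aop_zero, zero_mul]
    · have h1 : wgt a ≠ 0 := fun hh => ha (wgt_eq_zero.1 hh)
      have h2 : wgt a + wgt b = wgt m := by rw [← wgt_add, hab]
      have h3 := ih b (by omega)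
      rw [h3, mul_zero]

noncomputable def GS : MPS :=
  fun m => MvPowerSeries.coeff m (∑ jp ∈ Finset.range (wgt m + 1), Aop ^ jp)

lemma GS_stab (m : ℕ+ →₀ ℕ) {N : ℕ} (h : wgt m < N) :
    MvPowerSeries.coeff m GS = MvPowerSeries.coeff m (∑ jp ∈ Finset.range N, Aop ^ jp) := by
  have h0 : MvPowerSeries.coeff m GS
      = MvPowerSeries.coeff m (∑ jp ∈ Finset.range (wgt m + 1), Aop ^ jp) := rfl
  rw [h0, map_sum, map_sum]
  apply Finset.sum_subset
  · exact Finset.range_subset_range.2 (by omega)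
  · intro jp _ hjp
    rw [Finset.mem_range] at hjp
    exact coeff_pow_Aop jp m (by omega)

lemma GS_fix : GS = 1 + Aop * GS := by
  apply MvPowerSeries.ext
  intro m
  rw [map_add]
  have step1 : MvPowerSeries.coeff m (Aop * GS)
      = MvPowerSeries.coeff m (Aop * ∑ jp ∈ Finset.range (wgt m + 1), Aop ^ jp) := by
    rw [MvPowerSeries.coeff_mul, MvPowerSeries.coeff_mul]
    apply Finset.sum_congr rfl
    rintro ⟨a, b⟩ hab
    rw [Finset.HasAntidiagonal.mem_antidiagonal] at hab
    have h2 : wgt a + wgt b = wgt m := by rw [← wgt_add, hab]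
    rw [GS_stab b (N := wgt m + 1) (by omega)]
  have step2 : Aop * ∑ jp ∈ Finset.range (wgt m + 1), Aop ^ jp
      = ∑ jp ∈ Finset.range (wgt m + 1), Aop ^ (jp + 1) := by
    rw [Finset.mul_sum]
    apply Finset.sum_congr rfl
    intro jp _
    rw [pow_succ']
  have step3 : ∑ jp ∈ Finset.range (wgt m + 2), Aop ^ jp
      = (∑ jp ∈ Finset.range (wgt m + 1), Aop ^ (jp + 1)) + Aop ^ 0 := by
    exact Finset.sum_range_succ' _ _
  have step4 := GS_stab m (N := wgt m + 2) (by omega)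
  rw [step1, step2, step4, step3]
  rw [map_add]
  rw [pow_zero]
  omega

lemma fixed_uniq {X Y : MPS} (hX : X = uop + Aop * X) (hY : Y = uop + Aop * Y) : X = Y := by
  have key : ∀ W (m : ℕ+ →₀ ℕ), wgt m = W →
      MvPowerSeries.coeff m X = MvPowerSeries.coeff m Y := by
    intro W
    induction W using Nat.strong_induction_on with
    | _ W ih =>
      intro m hm
      conv_lhs => rw [hX]
      conv_rhs => rw [hY]
      rw [map_add, map_add, MvPowerSeries.coeff_mul, MvPowerSeries.coeff_mul]
      congr 1
      apply Finset.sum_congr rfl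
      rintro ⟨a, b⟩ hab
      rw [Finset.HasAntidiagonal.mem_antidiagonal] at hab
      rcases eq_or_ne a 0 with rfl | ha
      · rw [coeff_Aop_zero, zero_mul, zero_mul]
      · have h1 : wgt a ≠ 0 := fun hh => ha (wgt_eq_zero.1 hh)
        have h2 : wgt a + wgt b = wgt m := by rw [← wgt_add, hab]
        rw [ih (wgt b) (by omega) b rfl]
  apply MvPowerSeries.ext
  intro m
  exact key (wgt m) m rfl

lemma uGS_eq_Bop : uop * GS = Bop := by
  apply fixed_uniq _ Bop_fixed
  conv_lhs => rw [GS_fix]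
  ring

/-- the Wildberger–Rubine factorisation `S = 1 + (t₁ + t₂ + ⋯)·G`
with `G` having nonnegative integer coefficients. -/
theorem geode_exists :
    ∃ G : (ℕ+ →₀ ℕ) → ℕ, ∀ m : ℕ+ →₀ ℕ, m ≠ 0 →
      hyperCatalan m = ∑ n ∈ m.support, G (m - Finsupp.single n 1) := by
  refine ⟨fun m => MvPowerSeries.coeff m GS, ?_⟩
  intro m hm
  have h1 : hyperCatalan m = P 1 m := hyperCatalan_eq_P_one m
  have h2 : MvPowerSeries.coeff m (PS 1) = P 1 m := rfl
  have h3 := congrArg (MvPowerSeries.coeff m) master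
  rw [map_add] at h3
  have h4 : MvPowerSeries.coeff m (1 : MPS) = 0 := by
    rw [MvPowerSeries.coeff_one]
    simp [hm]
  have h5 := congrArg (MvPowerSeries.coeff m) uGS_eq_Bop
  have h6 : uop * GS = Dop (fun _ => GS) := by
    unfold uop
    rw [Dop_mul]
    exact Dop_congr (fun n => one_mul GS)
  rw [h6] at h5
  rw [coeff_Dop] at h5
  show hyperCatalan m = ∑ n ∈ m.support, MvPowerSeries.coeff (m - Finsupp.single n 1) GS
  omega
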